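/- Let T = {x₁,…,x_k} ⊆ ℝ^d, let p be a point such that the closed ball B of radius r > 0 around p within aff T is contained in conv T. If points y₁,…,y_k satisfy ‖yᵢ − xᵢ‖ < r for all i and all yᵢ lie in aff T, then p ∈ conv{y₁,…,y_k}. -/

import Mathlib

open scoped RealInnerProductSpace

/-- Perturbation stability lemma: if the closed ball of radius `r > 0` around `p`
within `aff T` is contained in `conv T` for `T = {x 1, …, x k}`, and each `y i` lies
in `aff T` with `‖y i - x i‖ < r`, then `p ∈ conv {y 1, …, y k}`. -/
theorem convexHull_perturbation {d k : ℕ} (x : Fin k → EuclideanSpace ℝ (Fin d))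
    (p : EuclideanSpace ℝ (Fin d)) (hp : p ∈ affineSpan ℝ (Set.range x)) (r : ℝ) (hr : 0 < r)
    (hball : {z : EuclideanSpace ℝ (Fin d) |
        z ∈ affineSpan ℝ (Set.range x) ∧ ‖z - p‖ ≤ r} ⊆ convexHull ℝ (Set.range x))
    (y : Fin k → EuclideanSpace ℝ (Fin d))
    (hy : ∀ i, ‖y i - x i‖ < r)
    (hyaff : ∀ i, y i ∈ affineSpan ℝ (Set.range x)) :
    p ∈ convexHull ℝ (Set.range y) := by
  by_contra hpc
  set S := affineSpan ℝ (Set.range x) with hS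
  set K := convexHull ℝ (Set.range y) with hK
  have hysub : K ⊆ (S : Set (EuclideanSpace ℝ (Fin d))) := by
    refine (convexHull_subset_affineSpan _).trans ?_
    exact_mod_cast affineSpan_le.2 (Set.range_subset_iff.2 hyaff)
  have hk : Nonempty (Fin k) := by
    by_contra h
    have hp' := hp
    rw [hS, Set.range_eq_empty_iff.2 (not_nonempty_iff.1 h)] at hp'
    rw [AffineSubspace.span_empty] at hp'
    exact hp'
  obtain ⟨i0⟩ := hk
  have hne : K.Nonempty := ⟨y i0, subset_convexHull ℝ _ (Set.mem_range_self i0)⟩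
  have hclosed : IsClosed K := ((Set.finite_range y).isCompact_convexHull ℝ).isClosed
  obtain ⟨v, hvK, hmin⟩ := exists_norm_eq_iInf_of_complete_convex hne
    hclosed.isComplete (convex_convexHull ℝ _) p
  rw [norm_eq_iInf_iff_real_inner_le_zero (convex_convexHull ℝ _) hvK] at hmin
  set u := p - v with hu_def
  have hu : u ≠ 0 := sub_ne_zero.2 fun h => hpc (h ▸ hvK)
  have hun : 0 < ‖u‖ := norm_pos_iff.2 hu
  set q := (r / ‖u‖) • u + p with hq_def
  have hqaff : q ∈ S := by
    have hud : u ∈ S.direction := AffineSubspace.vsub_mem_direction hp (hysub hvK)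
    have : q = (r / ‖u‖) • u +ᵥ p := rfl
    rw [this]
    exact AffineSubspace.vadd_mem_of_mem_direction (Submodule.smul_mem _ _ hud) hp
  have hqnorm : ‖q - p‖ = r := by
    have : q - p = (r / ‖u‖) • u := by rw [hq_def]; abel
    rw [this, norm_smul, Real.norm_eq_abs, abs_div, abs_of_pos hr, abs_of_pos hun]
    field_simp
  have hq : q ∈ convexHull ℝ (Set.range x) := hball ⟨hqaff, le_of_eq hqnorm⟩
  rw [convexHull_range_eq_exists_affineCombination] at hq
  obtain ⟨s, w, hw0, hw1, hwq⟩ := hq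
  have hqp : q - p = ∑ i ∈ s, w i • (x i - p) := by
    have := s.affineCombination_eq_weightedVSubOfPoint_vadd_of_sum_eq_one w x hw1 p
    rw [← hwq, this]
    simp [Finset.weightedVSubOfPoint_apply, vsub_eq_sub, vadd_eq_add]
  have key : ∀ i ∈ s, ⟪u, x i - p⟫ ≤ r * ‖u‖ - ‖u‖ ^ 2 := by
    intro i _
    have h1 : ⟪u, x i - y i⟫ ≤ r * ‖u‖ := by
      calc ⟪u, x i - y i⟫ ≤ ‖u‖ * ‖x i - y i‖ := real_inner_le_norm _ _
        _ ≤ ‖u‖ * r := by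
            have : ‖x i - y i‖ ≤ r := by rw [norm_sub_rev]; exact (hy i).le
            exact mul_le_mul_of_nonneg_left this hun.le
        _ = r * ‖u‖ := mul_comm _ _
    have h2 : ⟪u, y i - v⟫ ≤ 0 :=
      hmin (y i) (subset_convexHull ℝ _ (Set.mem_range_self i))
    have h3 : ⟪u, v - p⟫ = -‖u‖ ^ 2 := by
      have : v - p = -u := by rw [hu_def]; abel
      rw [this, inner_neg_right, real_inner_self_eq_norm_sq]
    have hsplit : x i - p = (x i - y i) + (y i - v) + (v - p) := by abel
    rw [hsplit, inner_add_right, inner_add_right, h3]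
    linarith
  have hlhs : ⟪u, q - p⟫ = r * ‖u‖ := by
    have : q - p = (r / ‖u‖) • u := by rw [hq_def]; abel
    rw [this, real_inner_smul_right, real_inner_self_eq_norm_sq]
    field_simp
  have hrhs : ⟪u, q - p⟫ ≤ r * ‖u‖ - ‖u‖ ^ 2 := by
    rw [hqp, inner_sum]
    calc ∑ i ∈ s, ⟪u, w i • (x i - p)⟫
        = ∑ i ∈ s, w i * ⟪u, x i - p⟫ :=
          Finset.sum_congr rfl fun i _ => real_inner_smul_right u (x i - p) (w i)
      _ ≤ ∑ i ∈ s, w i * (r * ‖u‖ - ‖u‖ ^ 2) := by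
          refine Finset.sum_le_sum fun i hi => ?_
          exact mul_le_mul_of_nonneg_left (key i hi) (hw0 i hi)
      _ = r * ‖u‖ - ‖u‖ ^ 2 := by rw [← Finset.sum_mul, hw1, one_mul]
  have : (0:ℝ) < ‖u‖ ^ 2 := by positivity
  linarith [hlhs ▸ hrhs]
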